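/- arXiv:1010.6115 — 2 statements merged into one kernel-verified Lean document; each statement's English description precedes it below -/
import Mathlib

section
/- For λ in the cone Γ_k (all σ_j(λ) > 0 for 1 ≤ j ≤ k) with 0 ≤ l < k ≤ n, the Newton–Maclaurin inequality holds: k(n-l+1)σ_{l-1}(λ)σ_k(λ) ≤ l(n-k+1)σ_l(λ)σ_{k-1}(λ). -/
open Polynomial

namespace NM

lemma esymm_cons (a : ℝ) (s : Multiset ℝ) (j : ℕ) :
    (a ::ₘ s).esymm (j+1) = s.esymm (j+1) + a * s.esymm j := by
  simp only [Multiset.esymm, Multiset.powersetCard_cons, Multiset.map_add, Multiset.sum_add,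
    Multiset.map_map, Function.comp_def, Multiset.prod_cons, ← Multiset.sum_map_mul_left]

lemma esymm_zero' (s : Multiset ℝ) : s.esymm 0 = 1 := by
  simp [Multiset.esymm, Multiset.powersetCard_zero_left]

lemma esymm_one' (s : Multiset ℝ) : s.esymm 1 = s.sum := by
  induction s using Multiset.induction with
  | empty => simp [Multiset.esymm, Multiset.powersetCard_zero_right]
  | cons a s ih =>
      rw [show (1:ℕ) = 0 + 1 from rfl, esymm_cons, ih, esymm_zero']
      simp [add_comm]

lemma esymm_card (s : Multiset ℝ) : s.esymm (Multiset.card s) = s.prod := by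
  have h1 : Multiset.card (Multiset.powersetCard (Multiset.card s) s) = 1 := by
    rw [Multiset.card_powersetCard, Nat.choose_self]
  obtain ⟨t, ht⟩ := Multiset.card_eq_one.mp h1
  have hs : s ∈ Multiset.powersetCard (Multiset.card s) s :=
    Multiset.mem_powersetCard.mpr ⟨le_refl s, rfl⟩
  rw [ht, Multiset.mem_singleton] at hs
  rw [Multiset.esymm, ht, hs]
  simp

lemma esymm_of_card_lt {s : Multiset ℝ} {j : ℕ} (h : Multiset.card s < j) : s.esymm j = 0 := by
  rw [Multiset.esymm, Multiset.powersetCard_eq_empty _ h]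
  simp

lemma sq_sum_id (s : Multiset ℝ) :
    s.sum ^ 2 = (s.map (· ^ 2)).sum + 2 * s.esymm 2 := by
  induction s using Multiset.induction with
  | empty => simp [Multiset.esymm, Multiset.powersetCard_zero_right]
  | cons a s ih =>
      rw [Multiset.sum_cons, Multiset.map_cons, Multiset.sum_cons,
        show (2:ℕ) = 1 + 1 from rfl, esymm_cons, esymm_one']
      rw [show (1:ℕ)+1 = 2 from rfl] at *
      nlinarith [ih]

lemma cauchy (s : Multiset ℝ) :
    s.sum ^ 2 ≤ (Multiset.card s : ℝ) * (s.map (· ^ 2)).sum := by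
  induction s using Multiset.induction with
  | empty => simp
  | cons a s ih =>
      rw [Multiset.sum_cons, Multiset.map_cons, Multiset.sum_cons, Multiset.card_cons]
      push_cast
      have hQ : (0:ℝ) ≤ (s.map (· ^ 2)).sum := by
        apply Multiset.sum_nonneg; intro y hy
        obtain ⟨z, _, rfl⟩ := Multiset.mem_map.mp hy
        positivity
      have hn : (0:ℝ) ≤ (Multiset.card s : ℝ) := by positivity
      rcases eq_or_ne s 0 with rfl | hs
      · simp
      · have hn1 : (1:ℝ) ≤ (Multiset.card s : ℝ) := by
          exact_mod_cast Nat.one_le_iff_ne_zero.mpr (by simpa using hs)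
        have h3 := mul_le_mul_of_nonneg_left ih hn
        nlinarith [sq_nonneg ((Multiset.card s : ℝ) * a - s.sum), sq_nonneg (a - s.sum),
          sq_nonneg s.sum]

/-- Newton's inequality, case `m = 1`: `2 n e₂ ≤ (n-1) e₁²`. -/
lemma newton_base (s : Multiset ℝ) :
    2 * (Multiset.card s : ℝ) * s.esymm 2 ≤ ((Multiset.card s : ℝ) - 1) * s.esymm 1 ^ 2 := by
  have h1 := sq_sum_id s
  have h2 := cauchy s
  rw [esymm_one']
  nlinarith

lemma reversal : ∀ (s : Multiset ℝ), (∀ y ∈ s, y ≠ 0) → ∀ j, j ≤ Multiset.card s →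
    s.prod * (s.map (·⁻¹)).esymm j = s.esymm (Multiset.card s - j) := by
  intro s
  induction s using Multiset.induction with
  | empty =>
      intro _ j hj
      simp only [Multiset.card_zero, Nat.le_zero] at hj
      subst hj
      simp [esymm_zero']
  | cons a s ih =>
      intro h j hj
      have ha : a ≠ 0 := h a (Multiset.mem_cons_self a s)
      have hs : ∀ y ∈ s, y ≠ 0 := fun y hy => h y (Multiset.mem_cons_of_mem hy)
      rw [Multiset.map_cons, Multiset.prod_cons, Multiset.card_cons]
      rcases j with _ | jj
      · rw [esymm_zero', mul_one, Nat.sub_zero, ← Multiset.card_cons a s, esymm_card,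
          Multiset.prod_cons]
      · rw [Multiset.card_cons] at hj
        rw [esymm_cons]
        rcases Nat.lt_or_ge jj (Multiset.card s) with hlt | hge
        · have e1 := ih hs (jj+1) hlt
          have e2 := ih hs jj hlt.le
          have hidx : Multiset.card s - jj = (Multiset.card s - (jj+1)) + 1 := by omega
          have hidx2 : Multiset.card s + 1 - (jj + 1) = Multiset.card s - jj := by omega
          rw [hidx2, hidx, esymm_cons]
          calc a * s.prod * ((s.map (·⁻¹)).esymm (jj+1) + a⁻¹ * (s.map (·⁻¹)).esymm jj)
              = a * (s.prod * (s.map (·⁻¹)).esymm (jj+1))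
                + (a * a⁻¹) * (s.prod * (s.map (·⁻¹)).esymm jj) := by ring
            _ = s.esymm (Multiset.card s - jj) + a * s.esymm (Multiset.card s - (jj+1)) := by
                rw [e1, e2, mul_inv_cancel₀ ha]; ring
            _ = s.esymm (Multiset.card s - (jj+1) + 1) + a * s.esymm (Multiset.card s - (jj+1)) := by
                rw [← hidx]
        · have hjj : jj = Multiset.card s := by omega
          have hz : (s.map (·⁻¹)).esymm (jj + 1) = 0 :=
            esymm_of_card_lt (by rw [Multiset.card_map]; omega)
          have e2 := ih hs jj (by omega)
          have h0 : Multiset.card s - jj = 0 := by omega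
          rw [h0, esymm_zero'] at e2
          have h1 : Multiset.card s + 1 - (jj + 1) = 0 := by omega
          rw [h1, esymm_zero', hz]
          calc a * s.prod * (0 + a⁻¹ * (s.map (·⁻¹)).esymm jj)
              = (a * a⁻¹) * (s.prod * (s.map (·⁻¹)).esymm jj) := by ring
            _ = 1 := by rw [mul_inv_cancel₀ ha, e2, one_mul]

lemma deriv_step (s : Multiset ℝ) (hs : s ≠ 0) :
    ∃ t : Multiset ℝ, Multiset.card t + 1 = Multiset.card s ∧
      ∀ j : ℕ, j < Multiset.card s →
        (Multiset.card s : ℝ) * t.esymm j = ((Multiset.card s : ℝ) - j) * s.esymm j := by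
  classical
  set n := Multiset.card s with hn
  have hn1 : 1 ≤ n := by
    rw [hn, Nat.one_le_iff_ne_zero, Ne, Multiset.card_eq_zero]; exact hs
  set P : ℝ[X] := (s.map fun r => X + C r).prod with hPdef
  have hP2 : P = ((s.map Neg.neg).map fun a => X - C a).prod := by
    rw [hPdef, Multiset.map_map]
    congr 1
    exact Multiset.map_congr rfl fun r _ => by simp [sub_neg_eq_add]
  have hroots : P.roots = s.map Neg.neg := by
    rw [hP2, roots_multiset_prod_X_sub_C]
  have hmonic' : ∀ p ∈ s.map fun r => X + C r, Monic p := by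
    intro p hp
    obtain ⟨r, _, rfl⟩ := Multiset.mem_map.mp hp
    exact monic_X_add_C r
  have hmonic : P.Monic := monic_multiset_prod_of_monic _ _ fun r _ => monic_X_add_C r
  have hdeg : P.natDegree = n := by
    rw [hPdef, natDegree_multiset_prod_of_monic _ hmonic']
    rw [Multiset.map_map]
    simp [Function.comp_def, natDegree_X_add_C, Multiset.map_const', Multiset.sum_replicate]
    exact hn.symm
  set D : ℝ[X] := derivative P with hDdef
  have hDcard : n - 1 ≤ Multiset.card D.roots := by
    have h := card_roots_le_derivative P
    rw [hroots, Multiset.card_map, ← hn, ← hDdef] at h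
    omega
  have hDdeg_le : D.natDegree ≤ n - 1 := by
    rw [← hdeg]; exact natDegree_derivative_le P
  have hDroots_le : Multiset.card D.roots ≤ D.natDegree := card_roots' D
  have hDdeg : D.natDegree = n - 1 := le_antisymm hDdeg_le (le_trans hDcard hDroots_le)
  have hDroots : Multiset.card D.roots = D.natDegree := by omega
  have hlead : D.leadingCoeff = (n : ℝ) := by
    rw [leadingCoeff, hDdeg, hDdef, coeff_derivative]
    have : n - 1 + 1 = n := by omega
    rw [this, ← hdeg, hmonic.coeff_natDegree, hdeg]
    have h2 : ((n - 1 : ℕ) : ℝ) = (n : ℝ) - 1 := by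
      rw [Nat.cast_sub hn1]; simp
    rw [h2]; ring
  refine ⟨D.roots.map Neg.neg, ?_, ?_⟩
  · rw [Multiset.card_map]; omega
  · intro j hj
    have hj1 : j ≤ n - 1 := by omega
    have e1 : D.coeff (n - 1 - j) =
        D.leadingCoeff * (-1) ^ (D.natDegree - (n - 1 - j)) *
          D.roots.esymm (D.natDegree - (n - 1 - j)) := by
      apply coeff_eq_esymm_roots_of_card hDroots
      omega
    rw [hDdeg] at e1
    have hj2 : n - 1 - (n - 1 - j) = j := by omega
    rw [hj2, hlead] at e1
    have e2 : (D.roots.map Neg.neg).esymm j = (-1) ^ j * D.roots.esymm j :=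
      Multiset.esymm_neg _ _
    have e3 : D.coeff (n - 1 - j) = P.coeff (n - 1 - j + 1) * ((n - 1 - j : ℕ) + 1) := by
      rw [hDdef, coeff_derivative]
    have hnj : n - 1 - j + 1 = n - j := by omega
    have e4 : P.coeff (n - j) = s.esymm j := by
      rw [hPdef, Multiset.prod_X_add_C_coeff s (by omega : n - j ≤ Multiset.card s)]
      congr 1
      omega
    rw [hnj, e4] at e3
    rw [e3] at e1
    have hcast : ((n - 1 - j : ℕ) : ℝ) + 1 = (n : ℝ) - j := by
      have : (n - 1 - j : ℕ) = n - (j + 1) := by omega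
      rw [this]
      push_cast [Nat.cast_sub (by omega : j + 1 ≤ n)]
      ring
    rw [hcast] at e1
    rw [e2, show (n:ℝ) * ((-1) ^ j * D.roots.esymm j)
        = (n:ℝ) * (-1) ^ j * D.roots.esymm j from by ring, ← e1]
    ring

/-- Newton's inequality: `(m+2)(n-m) e_m e_{m+2} ≤ (m+1)(n-m-1) e_{m+1}²`. -/
lemma newtonM : ∀ (n : ℕ) (s : Multiset ℝ), Multiset.card s = n → ∀ m : ℕ, m + 2 ≤ n →
    ((m:ℝ)+2) * ((n:ℝ) - m) * s.esymm m * s.esymm (m+2)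
      ≤ ((m:ℝ)+1) * ((n:ℝ) - m - 1) * s.esymm (m+1)^2 := by
  intro n
  induction n with
  | zero => intro s _ m hm; omega
  | succ n ih =>
    intro s hcard m hm2
    rcases Nat.eq_zero_or_pos m with rfl | hm0
    · -- base case m = 0 : Maclaurin `2 N e₂ ≤ (N-1) e₁²`
      have hb := newton_base s
      rw [hcard] at hb
      rw [esymm_zero']
      push_cast at hb ⊢
      norm_num
      calc 2 * ((n:ℝ)+1) * s.esymm 2
          ≤ (((n:ℝ)+1) - 1) * s.esymm 1 ^ 2 := by linarith
        _ = (n:ℝ) * s.esymm 1 ^ 2 := by ring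
    · rcases Nat.lt_or_ge (m + 2) (n + 1) with hlt | hge
      · -- inductive step via the derivative
        have hm2n : m + 2 ≤ n := by omega
        have hs0 : s ≠ 0 := by
          intro h; rw [h] at hcard; simp at hcard
        obtain ⟨t, htc, hrel⟩ := deriv_step s hs0
        have htcard : Multiset.card t = n := by rw [hcard] at htc; omega
        have ihineq := ih t htcard m hm2n
        set N : ℝ := (n:ℝ) + 1 with hN
        have hcardR : (Multiset.card s : ℝ) = N := by rw [hcard]; push_cast; rfl
        have h1 : N * t.esymm m = (N - m) * s.esymm m := by
          have := hrel m (by omega); rwa [hcardR] at this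
        have h2 : N * t.esymm (m+1) = (N - m - 1) * s.esymm (m+1) := by
          have := hrel (m+1) (by omega); rw [hcardR] at this
          push_cast at this ⊢; linarith [this]
        have h3 : N * t.esymm (m+2) = (N - m - 2) * s.esymm (m+2) := by
          have := hrel (m+2) (by omega); rw [hcardR] at this
          push_cast at this ⊢; linarith [this]
        have hnN : (n:ℝ) = N - 1 := by rw [hN]; ring
        have ih2 : ((m:ℝ)+2) * (N - m - 1) * (t.esymm m * t.esymm (m+2))
            ≤ ((m:ℝ)+1) * (N - m - 2) * t.esymm (m+1)^2 := by
          rw [hnN] at ihineq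
          calc ((m:ℝ)+2) * (N - m - 1) * (t.esymm m * t.esymm (m+2))
              = ((m:ℝ)+2) * ((N - 1) - m) * t.esymm m * t.esymm (m+2) := by ring
            _ ≤ ((m:ℝ)+1) * ((N - 1) - m - 1) * t.esymm (m+1)^2 := ihineq
            _ = ((m:ℝ)+1) * (N - m - 2) * t.esymm (m+1)^2 := by ring
        have hc : (0:ℝ) < (N - m - 1) * (N - m - 2) := by
          have hmn : (m:ℝ) + 2 ≤ (n:ℝ) := by exact_mod_cast hm2n
          apply mul_pos <;> (rw [hN]; linarith)
        have key : ((m:ℝ)+2) * (N - m) * s.esymm m * s.esymm (m+2) * ((N - m - 1) * (N - m - 2))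
            ≤ ((m:ℝ)+1) * (N - m - 1) * s.esymm (m+1)^2 * ((N - m - 1) * (N - m - 2)) := by
          have A : ((N - m) * s.esymm m) * ((N - m - 2) * s.esymm (m+2))
              = N^2 * (t.esymm m * t.esymm (m+2)) := by rw [← h1, ← h3]; ring
          have B : ((N - m - 1) * s.esymm (m+1))^2 = N^2 * t.esymm (m+1)^2 := by
            rw [← h2]; ring
          calc ((m:ℝ)+2) * (N - m) * s.esymm m * s.esymm (m+2) * ((N - m - 1) * (N - m - 2))
              = ((m:ℝ)+2) * (N - m - 1) * (((N - m) * s.esymm m) * ((N - m - 2) * s.esymm (m+2))) := by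
                ring
            _ = N^2 * (((m:ℝ)+2) * (N - m - 1) * (t.esymm m * t.esymm (m+2))) := by rw [A]; ring
            _ ≤ N^2 * (((m:ℝ)+1) * (N - m - 2) * t.esymm (m+1)^2) := by
                exact mul_le_mul_of_nonneg_left ih2 (by positivity)
            _ = ((m:ℝ)+1) * (N - m - 2) * ((N - m - 1) * s.esymm (m+1))^2 := by
                rw [B]; ring
            _ = ((m:ℝ)+1) * (N - m - 1) * s.esymm (m+1)^2 * ((N - m - 1) * (N - m - 2)) := by
                ring
        have goal' := le_of_mul_le_mul_right key hc
        push_cast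
        calc ((m:ℝ)+2) * ((n:ℝ) + 1 - m) * s.esymm m * s.esymm (m+2)
            = ((m:ℝ)+2) * (N - m) * s.esymm m * s.esymm (m+2) := by rw [hN]
          _ ≤ ((m:ℝ)+1) * (N - m - 1) * s.esymm (m+1)^2 := goal'
          _ = ((m:ℝ)+1) * ((n:ℝ) + 1 - m - 1) * s.esymm (m+1)^2 := by rw [hN]
      · -- top case m + 2 = n + 1 : reversal
        obtain rfl : n = m + 1 := by omega
        have hcs : Multiset.card s = m + 2 := by omega
        push_cast
        by_cases hz : (0:ℝ) ∈ s
        · have hprod : s.esymm (m+2) = 0 := by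
            rw [← hcs, esymm_card]
            exact Multiset.prod_eq_zero hz
          rw [hprod]
          have h1 : (0:ℝ) ≤ ((m:ℝ)+1) * s.esymm (m+1)^2 := by positivity
          nlinarith [h1]
        · have hne : ∀ y ∈ s, y ≠ 0 := fun y hy hy0 => hz (hy0 ▸ hy)
          set p : ℝ := s.prod with hp
          have hpne : p ≠ 0 := Multiset.prod_ne_zero hz
          have hp2 : (0:ℝ) < p^2 := by positivity
          set t : Multiset ℝ := s.map (·⁻¹) with ht
          have htc : Multiset.card t = m + 2 := by rw [ht, Multiset.card_map, hcs]
          have r1 : p * t.esymm 1 = s.esymm (m+1) := by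
            have h := reversal s hne 1 (by omega)
            rw [hcs] at h
            simpa using h
          have r2 : p * t.esymm 2 = s.esymm m := by
            have h := reversal s hne 2 (by omega)
            rw [hcs] at h
            simpa using h
          have r0 : s.esymm (m+2) = p := by rw [← hcs, esymm_card]
          have hb := newton_base t
          rw [htc] at hb
          have hcast : ((m+2:ℕ):ℝ) = (m:ℝ) + 2 := by push_cast; ring
          rw [hcast] at hb
          have hb2 := mul_le_mul_of_nonneg_left hb (le_of_lt hp2)
          calc ((m:ℝ)+2) * ((m:ℝ) + 1 + 1 - m) * s.esymm m * s.esymm (m+2)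
              = p^2 * (2 * ((m:ℝ)+2) * t.esymm 2) := by
                rw [← r2, r0]; ring
            _ ≤ p^2 * (((m:ℝ)+2-1) * t.esymm 1 ^ 2) := hb2
            _ = ((m:ℝ)+1) * ((m:ℝ) + 1 + 1 - m - 1) * s.esymm (m+1)^2 := by
                rw [← r1]; ring

end NM


/-- The `k`-th elementary symmetric polynomial of `x : Fin n → ℝ`. -/
def esymm (n : ℕ) (k : ℕ) (x : Fin n → ℝ) : ℝ :=
  ∑ s ∈ Finset.powersetCard k (Finset.univ : Finset (Fin n)), ∏ i ∈ s, x i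

/-- `σ_j` with the convention `σ_j = 0` for negative `j` (so `σ_{-1} = 0`). -/
def esymmZ (n : ℕ) (j : ℤ) (x : Fin n → ℝ) : ℝ :=
  if j < 0 then 0 else esymm n j.toNat x

/-- The Garding cone `Γ_k`: all `σ_j > 0` for `1 ≤ j ≤ k`. -/
def inGamma (n k : ℕ) (x : Fin n → ℝ) : Prop :=
  ∀ j : ℕ, 1 ≤ j → j ≤ k → 0 < esymm n j x

/-- Newton–Maclaurin inequality on `Γ_k`:
`k (n-l+1) σ_{l-1} σ_k ≤ l (n-k+1) σ_l σ_{k-1}` for `0 ≤ l < k ≤ n`. -/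
theorem newton_maclaurin (n k l : ℕ) (hlk : l < k) (hkn : k ≤ n)
    (x : Fin n → ℝ) (hx : inGamma n k x) :
    (k : ℝ) * ((n : ℝ) - l + 1) * esymmZ n ((l : ℤ) - 1) x * esymmZ n k x ≤
      (l : ℝ) * ((n : ℝ) - k + 1) * esymmZ n l x * esymmZ n ((k : ℤ) - 1) x := by
  rcases Nat.eq_zero_or_pos l with rfl | hl1
  · have h0 : esymmZ n ((0 : ℕ) - 1 : ℤ) x = 0 := by norm_num [esymmZ]
    rw [h0]
    push_cast
    norm_num
  · -- rewrite all `esymmZ` as `esymm`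
    have hk1 : 1 ≤ k := hlk.le.trans' hl1
    have hZ1 : esymmZ n ((l : ℤ) - 1) x = esymm n (l - 1) x := by
      rw [esymmZ, if_neg (by omega)]
      congr 1
      omega
    have hZ2 : esymmZ n (k : ℤ) x = esymm n k x := by
      rw [esymmZ, if_neg (by omega)]
      norm_num
    have hZ3 : esymmZ n (l : ℤ) x = esymm n l x := by
      rw [esymmZ, if_neg (by omega)]
      norm_num
    have hZ4 : esymmZ n ((k : ℤ) - 1) x = esymm n (k - 1) x := by
      rw [esymmZ, if_neg (by omega)]
      congr 1
      omega
    rw [hZ1, hZ2, hZ3, hZ4]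
    -- pass to the multiset of values
    set S : Multiset ℝ := Multiset.map x Finset.univ.val with hSdef
    have hS : ∀ j, Multiset.esymm S j = esymm n j x := by
      intro j
      rw [hSdef]
      exact Finset.esymm_map_val x Finset.univ j
    have hcard : Multiset.card S = n := by
      rw [hSdef]
      simp
    have epos : ∀ j, j ≤ k → 0 < Multiset.esymm S j := by
      intro j hj
      rcases Nat.eq_zero_or_pos j with rfl | hj1
      · rw [NM.esymm_zero']; norm_num
      · rw [hS]; exact hx j hj1 hj
    -- monotone chain of ratios
    have T : ∀ d a, a + d + 1 ≤ k →
        ((a:ℝ)+d+1) * ((n:ℝ) - a) * Multiset.esymm S a * Multiset.esymm S (a+d+1)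
          ≤ ((a:ℝ)+1) * ((n:ℝ) - a - d) * Multiset.esymm S (a+1) * Multiset.esymm S (a+d) := by
      intro d
      induction d with
      | zero =>
          intro a _
          apply le_of_eq
          push_cast
          ring
      | succ d ihd =>
          intro a ha
          have IH := ihd a (by omega)
          have NEW := NM.newtonM n S hcard (a+d) (by omega)
          push_cast at NEW ⊢
          have i1 : a + (d+1) + 1 = a+d+2 := rfl
          have i2 : a + (d+1) = a+d+1 := rfl
          rw [i1, i2]
          have eA : 0 < Multiset.esymm S a := epos _ (by omega)
          have eA1 : 0 < Multiset.esymm S (a+1) := epos _ (by omega)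
          have eAD : 0 < Multiset.esymm S (a+d) := epos _ (by omega)
          have eAD1 : 0 < Multiset.esymm S (a+d+1) := epos _ (by omega)
          have eAD2 : 0 < Multiset.esymm S (a+d+2) := epos _ (by omega)
          have hnad : (0:ℝ) < (n:ℝ) - a - d := by
            have h1 : a + d + 1 ≤ n := by omega
            have h2 : ((a + d + 1 : ℕ) : ℝ) ≤ (n : ℝ) := by exact_mod_cast h1
            push_cast at h2
            linarith
          have hc : (0:ℝ) < ((a:ℝ)+d+1) * ((n:ℝ) - a - d) *
              (Multiset.esymm S (a+d) * Multiset.esymm S (a+d+1)) := by positivity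
          have hn2 : (0:ℝ) < (n:ℝ) - ((a:ℝ)+(d:ℝ)) := by linarith
          have MUL := mul_le_mul IH NEW
            (le_of_lt (mul_pos (mul_pos (mul_pos (by positivity) hn2) eAD) eAD2))
            (le_of_lt (mul_pos (mul_pos (mul_pos (by positivity) hnad) eA1) eAD))
          apply le_of_mul_le_mul_right _ hc
          calc ((a:ℝ)+(d+1)+1) * ((n:ℝ) - a) * Multiset.esymm S a * Multiset.esymm S (a+d+2) *
                (((a:ℝ)+d+1) * ((n:ℝ) - a - d) *
                  (Multiset.esymm S (a+d) * Multiset.esymm S (a+d+1)))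
              = (((a:ℝ)+d+1) * ((n:ℝ) - a) * Multiset.esymm S a * Multiset.esymm S (a+d+1)) *
                (((a:ℝ)+d+2) * ((n:ℝ) - (a+d)) * Multiset.esymm S (a+d) *
                  Multiset.esymm S (a+d+2)) := by ring
            _ ≤ (((a:ℝ)+1) * ((n:ℝ) - a - d) * Multiset.esymm S (a+1) * Multiset.esymm S (a+d)) *
                (((a:ℝ)+d+1) * ((n:ℝ) - (a+d) - 1) * Multiset.esymm S (a+d+1)^2) := MUL
            _ = ((a:ℝ)+1) * ((n:ℝ) - a - (d+1)) * Multiset.esymm S (a+1) *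
                  Multiset.esymm S (a+d+1) *
                (((a:ℝ)+d+1) * ((n:ℝ) - a - d) *
                  (Multiset.esymm S (a+d) * Multiset.esymm S (a+d+1))) := by ring
    have final := T (k - l) (l - 1) (by omega)
    have j1 : l - 1 + (k - l) + 1 = k := by omega
    have j2 : l - 1 + 1 = l := by omega
    have j3 : l - 1 + (k - l) = k - 1 := by omega
    rw [j1, j2, j3] at final
    have c1 : ((l - 1 : ℕ) : ℝ) = (l : ℝ) - 1 := by
      rw [Nat.cast_sub hl1]; simp
    have c2 : ((k - l : ℕ) : ℝ) = (k : ℝ) - l := by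
      rw [Nat.cast_sub hlk.le]
    rw [c1, c2] at final
    simp only [hS] at final
    calc (k : ℝ) * ((n : ℝ) - l + 1) * esymm n (l - 1) x * esymm n k x
        = ((l:ℝ) - 1 + ((k:ℝ) - l) + 1) * ((n:ℝ) - ((l:ℝ) - 1)) * esymm n (l - 1) x *
            esymm n k x := by ring
      _ ≤ ((l:ℝ) - 1 + 1) * ((n:ℝ) - ((l:ℝ) - 1) - ((k:ℝ) - l)) * esymm n l x *
            esymm n (k - 1) x := final
      _ = (l : ℝ) * ((n : ℝ) - k + 1) * esymm n l x * esymm n (k - 1) x := by ring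
end

section
/- Each cone Γ_k is an open convex cone in ℝ^n with vertex at the origin: if λ, μ ∈ Γ_k and s, t > 0 then sλ + tμ ∈ Γ_k, and Γ_k is open. -/
set_option linter.unusedSectionVars false
set_option linter.unusedVariables false
set_option maxHeartbeats 1000000

open Finset Polynomial


noncomputable section

variable {ι : Type*} [DecidableEq ι]

/-- elementary symmetric polynomial over an index finset -/
def esOn (A : Finset ι) (j : ℕ) (x : ι → ℝ) : ℝ :=
  ∑ s ∈ A.powersetCard j, ∏ i ∈ s, x i

def GOn (A : Finset ι) (k : ℕ) (x : ι → ℝ) : Prop :=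
  ∀ j : ℕ, 1 ≤ j → j ≤ k → 0 < esOn A j x

lemma esOn_zero (A : Finset ι) (x : ι → ℝ) : esOn A 0 x = 1 := by
  simp [esOn]

lemma esOn_eq_zero (A : Finset ι) {j : ℕ} (h : A.card < j) (x : ι → ℝ) : esOn A j x = 0 := by
  rw [esOn, Finset.powersetCard_eq_empty.2 h, Finset.sum_empty]

lemma esOn_one (A : Finset ι) (x : ι → ℝ) : esOn A 1 x = ∑ i ∈ A, x i := by
  simp [esOn, Finset.powersetCard_one, Finset.sum_map]

lemma esOn_const_one (A : Finset ι) (j : ℕ) :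
    esOn A j (fun _ => 1) = (A.card.choose j : ℝ) := by
  simp [esOn, Finset.prod_const_one, Finset.card_powersetCard]

lemma esOn_smul (A : Finset ι) (j : ℕ) (c : ℝ) (x : ι → ℝ) :
    esOn A j (fun l => c * x l) = c ^ j * esOn A j x := by
  rw [esOn, esOn, Finset.mul_sum]
  refine Finset.sum_congr rfl fun s hs => ?_
  rw [Finset.prod_mul_distrib, Finset.prod_const,
    (Finset.mem_powersetCard.1 hs).2]

/-- Splitting off one variable, insert form. -/
lemma esOn_insert {B : Finset ι} {i : ι} (hi : i ∉ B) (j : ℕ) (x : ι → ℝ) :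
    esOn (insert i B) (j+1) x = esOn B (j+1) x + x i * esOn B j x := by
  classical
  rw [esOn, Finset.powersetCard_succ_insert hi]
  rw [Finset.sum_union]
  · congr 1
    · rw [Finset.sum_image, esOn, Finset.mul_sum]
      · refine Finset.sum_congr rfl fun s hs => ?_
        have hins : i ∉ s := fun h => hi ((Finset.mem_powersetCard.1 hs).1 h)
        rw [Finset.prod_insert hins]
      · intro s hs t ht hst
        have hs' : i ∉ s := fun h => hi ((Finset.mem_powersetCard.1 hs).1 h)
        have ht' : i ∉ t := fun h => hi ((Finset.mem_powersetCard.1 ht).1 h)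
        have := congrArg (fun u => Finset.erase u i) hst
        simpa [Finset.erase_insert hs', Finset.erase_insert ht'] using this
  · rw [Finset.disjoint_right]
    intro s hs hs'
    obtain ⟨t, ht, rfl⟩ := Finset.mem_image.1 hs
    have hts : t ⊆ B := (Finset.mem_powersetCard.1 ht).1
    have : i ∈ insert i t := Finset.mem_insert_self _ _
    exact hi ((Finset.mem_powersetCard.1 hs').1 this)

/-- Splitting off one variable. -/
lemma esOn_erase {A : Finset ι} {i : ι} (hi : i ∈ A) (j : ℕ) (x : ι → ℝ) :
    esOn A (j+1) x = esOn (A.erase i) (j+1) x + x i * esOn (A.erase i) j x := by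
  conv_lhs => rw [← Finset.insert_erase hi]
  exact esOn_insert (Finset.notMem_erase i A) j x


/-- double counting: `∑_{i∈A} x i σ_j(x|A\i) = (j+1) σ_{j+1}(x|A)`. -/
lemma sum_mul_esOn_erase (A : Finset ι) (j : ℕ) (x : ι → ℝ) :
    ∑ i ∈ A, x i * esOn (A.erase i) j x = (j+1 : ℝ) * esOn A (j+1) x := by
  classical
  have lhs : ∑ i ∈ A, x i * esOn (A.erase i) j x
      = ∑ p ∈ A.sigma (fun i => (A.erase i).powersetCard j), x p.1 * ∏ l ∈ p.2, x l := by
    rw [← Finset.sum_sigma' A (fun i => (A.erase i).powersetCard j)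
      (fun i s => x i * ∏ l ∈ s, x l)]
    exact Finset.sum_congr rfl fun i hi => by rw [esOn, Finset.mul_sum]
  have rhs : (j+1 : ℝ) * esOn A (j+1) x
      = ∑ p ∈ (A.powersetCard (j+1)).sigma (fun S => S), ∏ l ∈ p.1, x l := by
    rw [← Finset.sum_sigma' (A.powersetCard (j+1)) (fun S => S) (fun S _ => ∏ l ∈ S, x l),
      esOn, Finset.mul_sum]
    refine Finset.sum_congr rfl fun S hS => ?_
    rw [Finset.sum_const, (Finset.mem_powersetCard.1 hS).2, nsmul_eq_mul]
    push_cast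
    ring
  rw [lhs, rhs]
  refine Finset.sum_nbij' (i := fun p => ⟨insert p.1 p.2, p.1⟩)
    (j := fun q => ⟨q.2, q.1.erase q.2⟩) ?_ ?_ ?_ ?_ ?_
  · rintro ⟨i, s⟩ hp
    rw [Finset.mem_sigma] at hp
    obtain ⟨hiA, hs⟩ := hp
    rw [Finset.mem_powersetCard] at hs
    have hins : i ∉ s := fun h => Finset.notMem_erase i A (hs.1 h)
    rw [Finset.mem_sigma, Finset.mem_powersetCard]
    refine ⟨⟨Finset.insert_subset hiA (hs.1.trans (Finset.erase_subset i A)), ?_⟩,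
      Finset.mem_insert_self _ _⟩
    rw [Finset.card_insert_of_notMem hins, hs.2]
  · rintro ⟨S, i⟩ hq
    rw [Finset.mem_sigma] at hq
    obtain ⟨hS, hiS⟩ := hq
    rw [Finset.mem_powersetCard] at hS
    rw [Finset.mem_sigma, Finset.mem_powersetCard]
    exact ⟨hS.1 hiS, Finset.erase_subset_erase i hS.1,
      by rw [Finset.card_erase_of_mem hiS, hS.2]; omega⟩
  · rintro ⟨i, s⟩ hp
    rw [Finset.mem_sigma] at hp
    have hins : i ∉ s := fun h => Finset.notMem_erase i A ((Finset.mem_powersetCard.1 hp.2).1 h)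
    simp [Finset.erase_insert hins]
  · rintro ⟨S, i⟩ hq
    rw [Finset.mem_sigma] at hq
    simp [Finset.insert_erase hq.2]
  · rintro ⟨i, s⟩ hp
    rw [Finset.mem_sigma] at hp
    have hins : i ∉ s := fun h => Finset.notMem_erase i A ((Finset.mem_powersetCard.1 hp.2).1 h)
    exact (Finset.prod_insert hins).symm

/-- expansion of esymm after adding a constant to all entries. -/
lemma esOn_shift (A : Finset ι) (j : ℕ) (b : ℝ) (x : ι → ℝ) :
    esOn A j (fun l => x l + b)
      = ∑ m ∈ Finset.range (j+1),
          ((A.card - m).choose (j-m) : ℝ) * b^(j-m) * esOn A m x := by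
  classical
  have step1 : esOn A j (fun l => x l + b)
      = ∑ s ∈ A.powersetCard j, ∑ t ∈ s.powerset, (∏ l ∈ t, x l) * b^(j - t.card) := by
    rw [esOn]
    refine Finset.sum_congr rfl fun s hs => ?_
    rw [Finset.prod_add]
    refine Finset.sum_congr rfl fun t ht => ?_
    rw [Finset.prod_const, Finset.card_sdiff_of_subset (Finset.mem_powerset.1 ht),
      (Finset.mem_powersetCard.1 hs).2]
  rw [step1]
  have step2 : ∀ s ∈ A.powersetCard j,
      ∑ t ∈ s.powerset, (∏ l ∈ t, x l) * b^(j - t.card)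
      = ∑ m ∈ Finset.range (j+1), ∑ t ∈ s.powersetCard m, (∏ l ∈ t, x l) * b^(j - m) := by
    intro s hs
    have hcard := (Finset.mem_powersetCard.1 hs).2
    rw [← Finset.sum_fiberwise_of_maps_to (g := fun t => t.card)
      (t := Finset.range (j+1)) (fun t ht => by
        rw [Finset.mem_range, Nat.lt_succ_iff, ← hcard]
        exact Finset.card_le_card (Finset.mem_powerset.1 ht))]
    refine Finset.sum_congr rfl fun m hm => ?_
    rw [show (Finset.filter (fun t => t.card = m) s.powerset) = s.powersetCard m from
      Finset.powersetCard_eq_filter.symm]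
    exact Finset.sum_congr rfl fun t ht => by
      rw [(Finset.mem_powersetCard.1 ht).2]
  rw [Finset.sum_congr rfl step2, Finset.sum_comm]
  refine Finset.sum_congr rfl fun m hm => ?_
  rw [Finset.mem_range, Nat.lt_succ_iff] at hm
  -- double counting for fixed m
  have key : ∑ s ∈ A.powersetCard j, ∑ t ∈ s.powersetCard m, (∏ l ∈ t, x l) * b^(j-m)
      = ∑ t ∈ A.powersetCard m, ∑ u ∈ (A \ t).powersetCard (j-m), (∏ l ∈ t, x l) * b^(j-m) := by
    rw [Finset.sum_sigma' (A.powersetCard j) (fun s => s.powersetCard m)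
        (fun _ t => (∏ l ∈ t, x l) * b^(j-m)),
      Finset.sum_sigma' (A.powersetCard m) (fun t => (A \ t).powersetCard (j-m))
        (fun t _ => (∏ l ∈ t, x l) * b^(j-m))]
    refine Finset.sum_nbij' (i := fun p => ⟨p.2, p.1 \ p.2⟩) (j := fun q => ⟨q.1 ∪ q.2, q.1⟩)
      ?_ ?_ ?_ ?_ ?_
    · rintro ⟨s, t⟩ hp
      rw [Finset.mem_sigma] at hp
      obtain ⟨hs, ht⟩ := hp
      rw [Finset.mem_powersetCard] at hs ht
      rw [Finset.mem_sigma, Finset.mem_powersetCard, Finset.mem_powersetCard]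
      refine ⟨⟨ht.1.trans hs.1, ht.2⟩, ?_, ?_⟩
      · intro l hl
        rw [Finset.mem_sdiff] at hl ⊢
        exact ⟨hs.1 hl.1, hl.2⟩
      · rw [Finset.card_sdiff_of_subset ht.1, hs.2, ht.2]
    · rintro ⟨t, u⟩ hq
      rw [Finset.mem_sigma] at hq
      obtain ⟨ht, hu⟩ := hq
      rw [Finset.mem_powersetCard] at ht hu
      have hdisj : Disjoint t u := by
        refine Finset.disjoint_left.2 fun a hat hau => ?_
        exact (Finset.mem_sdiff.1 (hu.1 hau)).2 hat
      rw [Finset.mem_sigma, Finset.mem_powersetCard, Finset.mem_powersetCard]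
      refine ⟨⟨Finset.union_subset ht.1 (hu.1.trans Finset.sdiff_subset), ?_⟩,
        Finset.subset_union_left, ht.2⟩
      rw [Finset.card_union_of_disjoint hdisj, ht.2, hu.2]
      omega
    · rintro ⟨s, t⟩ hp
      rw [Finset.mem_sigma] at hp
      have hts : t ⊆ s := (Finset.mem_powersetCard.1 hp.2).1
      simp [Finset.union_sdiff_of_subset hts]
    · rintro ⟨t, u⟩ hq
      rw [Finset.mem_sigma] at hq
      have hdisj : Disjoint t u := by
        refine Finset.disjoint_left.2 fun a hat hau => ?_
        exact (Finset.mem_sdiff.1 ((Finset.mem_powersetCard.1 hq.2).1 hau)).2 hat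
      simp [Finset.union_sdiff_cancel_left hdisj]
    · rintro ⟨s, t⟩ _
      rfl
  rw [key]
  rw [esOn, Finset.mul_sum]
  refine Finset.sum_congr rfl fun t ht => ?_
  rw [Finset.sum_const, Finset.card_powersetCard,
    Finset.card_sdiff_of_subset (Finset.mem_powersetCard.1 ht).1, (Finset.mem_powersetCard.1 ht).2,
    nsmul_eq_mul]
  ring


/-- real-rooted polynomials -/
def RR (p : ℝ[X]) : Prop := Multiset.card p.roots = p.natDegree

lemma RR.derivative {p : ℝ[X]} (h : RR p) : RR (Polynomial.derivative p) := by
  by_cases h0 : p.natDegree = 0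
  · obtain ⟨a, rfl⟩ := Polynomial.natDegree_eq_zero.1 h0
    simp [RR]
  · have hd := Polynomial.card_roots_le_derivative p
    have h1 : Multiset.card (Polynomial.derivative p).roots
        ≤ (Polynomial.derivative p).natDegree := Polynomial.card_roots' _
    have h2 : (Polynomial.derivative p).natDegree ≤ p.natDegree - 1 :=
      Polynomial.natDegree_derivative_le p
    have := h
    rw [RR] at *
    omega

lemma RR.iterate {p : ℝ[X]} (h : RR p) (m : ℕ) : RR (Polynomial.derivative^[m] p) := by
  induction m with
  | zero => simpa
  | succ d hd => rw [Function.iterate_succ_apply']; exact hd.derivative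

lemma natDegree_iter_deriv (p : ℝ[X]) (hp : p ≠ 0) {m : ℕ} (hm : m ≤ p.natDegree) :
    (Polynomial.derivative^[m] p).natDegree = p.natDegree - m := by
  refine le_antisymm (Polynomial.natDegree_iterate_derivative p m)
    (Polynomial.le_natDegree_of_ne_zero ?_)
  rw [Polynomial.coeff_iterate_derivative, Nat.sub_add_cancel hm]
  have h1 : p.natDegree.descFactorial m ≠ 0 := by
    rw [Ne, Nat.descFactorial_eq_zero_iff_lt]
    omega
  have h2 : p.coeff p.natDegree ≠ 0 := by
    rw [← Polynomial.leadingCoeff]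
    exact Polynomial.leadingCoeff_ne_zero.2 hp
  simp only [nsmul_eq_mul]
  exact mul_ne_zero (Nat.cast_ne_zero.2 h1) h2

lemma reverse_X_sub_C (a : ℝ) : (X - C a).reverse = 1 - C a * X := by
  rw [Polynomial.reverse, Polynomial.natDegree_X_sub_C]
  have : (X - C a : ℝ[X]) = C 1 * X ^ 1 + C (-a) * X ^ 0 := by
    simp; ring
  rw [this, Polynomial.reflect_add, Polynomial.reflect_C_mul_X_pow,
    Polynomial.reflect_C_mul_X_pow]
  rw [Polynomial.revAt_le (le_refl 1), Polynomial.revAt_le zero_le_one]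
  simp
  ring

lemma reverse_multiset_prod_X_sub_C (s : Multiset ℝ) :
    ((s.map (fun a => X - C a)).prod).reverse = (s.map (fun a => 1 - C a * X)).prod := by
  induction s using Multiset.induction with
  | empty =>
      simp only [Multiset.map_zero, Multiset.prod_zero]
      rw [Polynomial.reverse, Polynomial.natDegree_one]
      rw [show (1 : ℝ[X]) = C 1 from by simp, Polynomial.reflect_C]
      simp
  | cons a s ih =>
      simp only [Multiset.map_cons, Multiset.prod_cons]
      rw [Polynomial.reverse_mul_of_domain, ih, reverse_X_sub_C]

/-- reversal of a real-rooted polynomial with nonzero constant term is real-rooted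
of the same degree -/
lemma RR.reverse {p : ℝ[X]} (h : RR p) (h0 : p.coeff 0 ≠ 0) :
    RR p.reverse ∧ p.reverse.natDegree = p.natDegree := by
  have hp : p ≠ 0 := fun hh => by simp [hh] at h0
  have hsplit : p.Splits := (Polynomial.splits_iff_card_roots).2 h
  have hfac := (Polynomial.C_leadingCoeff_mul_prod_multiset_X_sub_C h).symm
  have hroots0 : ∀ a ∈ p.roots, a ≠ 0 := by
    intro a ha ha'
    subst ha'
    have : p.IsRoot 0 := Polynomial.isRoot_of_mem_roots ha
    rw [Polynomial.IsRoot, ← Polynomial.coeff_zero_eq_eval_zero] at this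
    exact h0 this
  have hrev : p.reverse
      = C (p.leadingCoeff * (p.roots.map (fun a => -a)).prod)
        * ((p.roots.map (fun a => a⁻¹)).map (fun a => X - C a)).prod := by
    conv_lhs => rw [hfac]
    rw [Polynomial.reverse_mul_of_domain, reverse_multiset_prod_X_sub_C]
    have : (p.roots.map (fun a => (1 : ℝ[X]) - C a * X))
        = p.roots.map (fun a => C (-a) * (X - C a⁻¹)) := by
      refine Multiset.map_congr rfl fun a ha => ?_
      have ha0 : a ≠ 0 := hroots0 a ha
      rw [mul_sub, ← Polynomial.C_mul, neg_mul, mul_inv_cancel₀ ha0, Polynomial.C_neg,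
        Polynomial.C_neg, Polynomial.C_1]
      ring
    rw [this, Multiset.prod_map_mul]
    have hC : (p.roots.map (fun a => C (-a))).prod = C ((p.roots.map (fun a => -a)).prod) := by
      rw [show (fun a : ℝ => C (-a)) = (Polynomial.C : ℝ →+* ℝ[X]) ∘ (fun a : ℝ => -a) from rfl,
        ← Multiset.map_map]
      exact (map_multiset_prod (Polynomial.C : ℝ →+* ℝ[X]) _).symm
    rw [hC]
    have hrevC : (C p.leadingCoeff : ℝ[X]).reverse = C p.leadingCoeff := by
      rw [Polynomial.reverse, Polynomial.natDegree_C, Polynomial.reflect_C]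
      simp
    rw [hrevC, Polynomial.C_mul, Multiset.map_map]
    simp only [Function.comp]
    ring
  have hc : p.leadingCoeff * (p.roots.map (fun a => -a)).prod ≠ 0 := by
    refine mul_ne_zero (Polynomial.leadingCoeff_ne_zero.2 hp) (Multiset.prod_ne_zero ?_)
    intro hmem
    obtain ⟨a, ha, ha0⟩ := Multiset.mem_map.1 hmem
    exact hroots0 a ha (neg_eq_zero.1 ha0)
  constructor
  · rw [RR, hrev, Polynomial.roots_C_mul _ hc, Polynomial.natDegree_C_mul hc,
      Polynomial.roots_multiset_prod_X_sub_C, Polynomial.natDegree_multiset_prod_X_sub_C_eq_card,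
      Multiset.card_map]
  · rw [hrev, Polynomial.natDegree_C_mul hc,
      Polynomial.natDegree_multiset_prod_X_sub_C_eq_card, Multiset.card_map, ← h]

end

noncomputable section NewtonSpecial

variable {ι : Type*} [DecidableEq ι]

/-- the generating polynomial `∏ (1 + x i X)`, whose coefficients are `esOn`. -/
def genPoly (A : Finset ι) (x : ι → ℝ) : ℝ[X] := ∏ i ∈ A, (Polynomial.C (x i) * X + 1)

lemma coeff_genPoly (A : Finset ι) (x : ι → ℝ) (j : ℕ) :
    (genPoly A x).coeff j = esOn A j x := by
  classical
  rw [genPoly]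
  rw [Finset.prod_add]
  have : ∀ t ∈ A.powerset,
      (∏ i ∈ t, (Polynomial.C (x i) * X)) * (∏ _i ∈ A \ t, (1:ℝ[X]))
        = Polynomial.C (∏ i ∈ t, x i) * X ^ t.card := by
    intro t _
    rw [Finset.prod_const_one, mul_one, Finset.prod_mul_distrib, Finset.prod_const,
      map_prod]
  rw [Finset.sum_congr rfl this, Polynomial.finset_sum_coeff]
  have : ∀ t ∈ A.powerset,
      (Polynomial.C (∏ i ∈ t, x i) * X ^ t.card).coeff j
        = if t.card = j then (∏ i ∈ t, x i) else 0 := by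
    intro t _
    rw [Polynomial.coeff_C_mul, Polynomial.coeff_X_pow]
    by_cases h : t.card = j
    · simp [h]
    · simp [h, Ne.symm h]
  rw [Finset.sum_congr rfl this, Finset.sum_ite, Finset.sum_const_zero, add_zero, esOn,
    Finset.powersetCard_eq_filter]

lemma genPoly_RR (A : Finset ι) (x : ι → ℝ) :
    RR (genPoly A x) ∧ genPoly A x ≠ 0 := by
  classical
  have hne : genPoly A x ≠ 0 := by
    intro h
    have := coeff_genPoly A x 0
    rw [h] at this
    simp [esOn] at this
  refine ⟨?_, hne⟩
  have hsplit : genPoly A x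
      = ∏ i ∈ A.filter (fun i => x i ≠ 0), (Polynomial.C (x i) * X + 1) := by
    rw [genPoly, ← Finset.prod_filter_mul_prod_filter_not A (fun i => x i ≠ 0)]
    have : ∀ i ∈ A.filter (fun i => ¬ x i ≠ 0), (Polynomial.C (x i) * X + 1) = 1 := by
      intro i hi
      have : x i = 0 := by simpa using (Finset.mem_filter.1 hi).2
      simp [this]
    rw [Finset.prod_congr rfl this, Finset.prod_const_one, mul_one]
  set A' := A.filter (fun i => x i ≠ 0) with hA'
  have hx' : ∀ i ∈ A', x i ≠ 0 := fun i hi => (Finset.mem_filter.1 hi).2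
  have hfac : genPoly A x
      = Polynomial.C (∏ i ∈ A', x i)
        * ((A'.val.map (fun i => -(x i)⁻¹)).map (fun a => X - Polynomial.C a)).prod := by
    rw [hsplit]
    have : ∀ i ∈ A', (Polynomial.C (x i) * X + 1)
        = Polynomial.C (x i) * (X - Polynomial.C (-(x i)⁻¹)) := by
      intro i hi
      rw [mul_sub, ← Polynomial.C_mul, mul_neg, mul_inv_cancel₀ (hx' i hi), Polynomial.C_neg,
        Polynomial.C_1, sub_neg_eq_add]
    rw [Finset.prod_congr rfl this, Finset.prod_mul_distrib, map_prod]
    congr 1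
    rw [Finset.prod, Multiset.map_map]
    rfl
  have hc : (∏ i ∈ A', x i) ≠ 0 := Finset.prod_ne_zero_iff.2 hx'
  rw [RR, hfac, Polynomial.roots_C_mul _ hc, Polynomial.natDegree_C_mul hc,
    Polynomial.roots_multiset_prod_X_sub_C, Polynomial.natDegree_multiset_prod_X_sub_C_eq_card]

/-- Newton-type inequality: if `σ_{m+1} = 0 < σ_m` then `σ_{m+2} ≤ 0`. -/
lemma newton_special (A : Finset ι) (x : ι → ℝ) (m : ℕ)
    (h1 : esOn A (m+1) x = 0) (h2 : 0 < esOn A m x) : esOn A (m+2) x ≤ 0 := by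
  classical
  by_contra hpos'
  push_neg at hpos'
  have hpos : 0 < esOn A (m+2) x := hpos'
  obtain ⟨hUrr, hUne⟩ := genPoly_RR A x
  set U := genPoly A x with hU
  set d := U.natDegree with hd
  have hd2 : m + 2 ≤ d := by
    refine Polynomial.le_natDegree_of_ne_zero ?_
    rw [coeff_genPoly]
    exact ne_of_gt hpos
  set W := Polynomial.derivative^[m] U with hWdef
  have hWrr : RR W := hUrr.iterate m
  have hWc : ∀ j, W.coeff j = ((j+m).descFactorial m : ℝ) * esOn A (j+m) x := by
    intro j
    rw [hWdef, Polynomial.coeff_iterate_derivative, coeff_genPoly, nsmul_eq_mul]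
  have hW0 : W.coeff 0 = ((m.descFactorial m : ℝ)) * esOn A m x := by
    rw [hWc 0]; norm_num
  have hdfm : 0 < m.descFactorial m := by
    rw [Nat.descFactorial_self]; exact Nat.factorial_pos m
  have hW0pos : 0 < W.coeff 0 := by
    rw [hW0]
    exact mul_pos (by exact_mod_cast hdfm) h2
  have hW1 : W.coeff 1 = 0 := by
    rw [hWc 1, show 1 + m = m + 1 from by omega, h1, mul_zero]
  have hW2pos : 0 < W.coeff 2 := by
    rw [hWc 2, show 2 + m = m + 2 from by omega]
    refine mul_pos ?_ hpos
    have : 0 < (m+2).descFactorial m := by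
      rcases Nat.eq_zero_or_pos ((m+2).descFactorial m) with h | h
      · exact absurd (Nat.descFactorial_eq_zero_iff_lt.1 h) (by omega)
      · exact h
    exact_mod_cast this
  have hWne : W ≠ 0 := fun h => by rw [h] at hW0pos; simp at hW0pos
  have hWdeg : W.natDegree = d - m := natDegree_iter_deriv U hUne (by omega)
  set D := d - m with hD
  have hD2 : 2 ≤ D := by omega
  obtain ⟨hVrr, hVdeg⟩ := hWrr.reverse (ne_of_gt hW0pos)
  set V := W.reverse with hVdef
  have hVdeg' : V.natDegree = D := by rw [hVdeg, hWdeg]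
  have hVcoeff : ∀ n, n ≤ D → V.coeff n = W.coeff (D - n) := by
    intro n hn
    rw [hVdef, Polynomial.coeff_reverse, hWdeg, Polynomial.revAt_le (by omega)]
  have hVne : V ≠ 0 := by
    intro h
    have := hVcoeff D le_rfl
    rw [h] at this
    simp only [Polynomial.coeff_zero, Nat.sub_self] at this
    rw [← this] at hW0pos
    exact lt_irrefl 0 hW0pos
  set Q := Polynomial.derivative^[D-2] V with hQdef
  have hQrr : RR Q := hVrr.iterate _
  have hQdeg : Q.natDegree = 2 := by
    rw [hQdef, natDegree_iter_deriv V hVne (by omega), hVdeg']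
    omega
  have hQ0 : 0 < Q.coeff 0 := by
    rw [hQdef, Polynomial.coeff_iterate_derivative, nsmul_eq_mul, zero_add,
      hVcoeff (D-2) (by omega), show D - (D-2) = 2 from by omega]
    refine mul_pos ?_ hW2pos
    have : 0 < (D-2).descFactorial (D-2) := by
      rw [Nat.descFactorial_self]; exact Nat.factorial_pos _
    exact_mod_cast this
  have hQ1 : Q.coeff 1 = 0 := by
    rw [hQdef, Polynomial.coeff_iterate_derivative, nsmul_eq_mul,
      hVcoeff (1 + (D-2)) (by omega), show D - (1 + (D-2)) = 1 from by omega, hW1, mul_zero]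
  have hQ2 : 0 < Q.coeff 2 := by
    rw [hQdef, Polynomial.coeff_iterate_derivative, nsmul_eq_mul,
      hVcoeff (2 + (D-2)) (by omega), show D - (2 + (D-2)) = 0 from by omega]
    refine mul_pos ?_ hW0pos
    have : 0 < (2 + (D-2)).descFactorial (D-2) := by
      rcases Nat.eq_zero_or_pos ((2 + (D-2)).descFactorial (D-2)) with h | h
      · exact absurd (Nat.descFactorial_eq_zero_iff_lt.1 h) (by omega)
      · exact h
    exact_mod_cast this
  -- Q is real-rooted of degree 2, so it has a real root r
  have hQne : Q ≠ 0 := fun h => by rw [h] at hQ0; simp at hQ0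
  have hcard : Multiset.card Q.roots = 2 := by rw [hQrr, hQdeg]
  have hex : ∃ r, r ∈ Q.roots := Multiset.card_pos_iff_exists_mem.1 (by omega)
  obtain ⟨r, hr⟩ := hex
  have hroot : Q.eval r = 0 := (Polynomial.isRoot_of_mem_roots hr)
  have heval : Q.eval r = Q.coeff 0 + Q.coeff 1 * r + Q.coeff 2 * r^2 := by
    rw [Polynomial.eval_eq_sum_range, hQdeg]
    rw [Finset.sum_range_succ, Finset.sum_range_succ, Finset.sum_range_one]
    ring
  rw [heval, hQ1] at hroot
  nlinarith [sq_nonneg r, hQ0, hQ2]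

end NewtonSpecial

noncomputable section MainInduction

variable {ι : Type*} [DecidableEq ι]

lemma esOn_pos {A : Finset ι} {k : ℕ} {x : ι → ℝ} (h : GOn A k x) {j : ℕ} (hj : j ≤ k) :
    0 < esOn A j x := by
  rcases Nat.eq_zero_or_pos j with rfl | hj'
  · rw [esOn_zero]; norm_num
  · exact h j hj' hj

lemma GOn_card {A : Finset ι} {k : ℕ} {x : ι → ℝ} (h : GOn A k x) (hk : 1 ≤ k) : k ≤ A.card := by
  by_contra hc
  have := h k hk le_rfl
  rw [esOn_eq_zero A (by omega) x] at this
  exact lt_irrefl 0 this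

lemma GOn_shift {A : Finset ι} {k : ℕ} {x : ι → ℝ} (h : GOn A k x) {b : ℝ} (hb : 0 ≤ b) :
    GOn A k (fun l => x l + b) := by
  intro j hj1 hjk
  rw [esOn_shift]
  refine Finset.sum_pos' (fun m hm => ?_) ⟨j, Finset.self_mem_range_succ j, ?_⟩
  · rw [Finset.mem_range, Nat.lt_succ_iff] at hm
    have h1 : (0:ℝ) ≤ ((A.card - m).choose (j-m) : ℝ) := Nat.cast_nonneg _
    have h2 : (0:ℝ) ≤ b^(j-m) := pow_nonneg hb _
    have h3 : 0 < esOn A m x := esOn_pos h (le_trans hm hjk)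
    positivity
  · simpa using esOn_pos h hjk

lemma GOn_seg {A : Finset ι} {k : ℕ} {x : ι → ℝ} (h : GOn A k x) (hk : 1 ≤ k) {τ : ℝ}
    (hτ : τ ∈ Set.Icc (0:ℝ) 1) : GOn A k (fun l => (1-τ) * x l + τ) := by
  obtain ⟨h0, h1⟩ := hτ
  rcases eq_or_lt_of_le h1 with rfl | hlt
  · have : (fun l => (1-(1:ℝ)) * x l + 1) = fun _ => (1:ℝ) := by
      funext l; ring
    rw [this]
    intro j hj1 hjk
    rw [esOn_const_one]
    have : j ≤ A.card := le_trans hjk (GOn_card h hk)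
    exact_mod_cast Nat.choose_pos this
  · have hc : 0 < 1 - τ := by linarith
    have hb : 0 ≤ τ / (1 - τ) := div_nonneg h0 (le_of_lt hc)
    have heq : (fun l => (1-τ) * x l + τ)
        = fun l => (1-τ) * ((fun l' => x l' + τ/(1-τ)) l) := by
      funext l
      field_simp
    rw [heq]
    intro j hj1 hjk
    rw [esOn_smul]
    exact mul_pos (pow_pos hc j) (GOn_shift h hb j hj1 hjk)

lemma sq_div_add (u v a b : ℝ) (ha : 0 < a) (hb : 0 < b) :
    (u+v)^2/(a+b) ≤ u^2/a + v^2/b := by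
  rw [div_add_div _ _ (ne_of_gt ha) (ne_of_gt hb),
    div_le_div_iff₀ (by positivity) (by positivity)]
  nlinarith [sq_nonneg (u*b - v*a)]

end MainInduction

noncomputable section BigInduction

variable {ι : Type*} [DecidableEq ι]

theorem gamma_bundle (k : ℕ) : ∀ (A : Finset ι) (x y : ι → ℝ),
    (GOn A (k+1) x → ∀ i ∈ A, GOn (A.erase i) k x) ∧
    (GOn A (k+1) x → GOn A (k+1) y → GOn A (k+1) (x + y) ∧
      esOn A (k+1) x / esOn A k x + esOn A (k+1) y / esOn A k y
        ≤ esOn A (k+1) (x+y) / esOn A k (x+y)) := by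
  induction k with
  | zero =>
      intro A x y
      constructor
      · intro _ i _ j hj1 hj0
        omega
      · intro hx hy
        have hadd : esOn A 1 (x+y) = esOn A 1 x + esOn A 1 y := by
          rw [esOn_one, esOn_one, esOn_one, ← Finset.sum_add_distrib]
          rfl
        constructor
        · intro j hj1 hjk
          have : j = 1 := by omega
          subst this
          rw [hadd]
          exact add_pos (hx 1 le_rfl le_rfl) (hy 1 le_rfl le_rfl)
        · rw [esOn_zero, esOn_zero, esOn_zero, div_one, div_one, div_one, hadd]
  | succ k ih =>
      intro A x y
      -- nonvanishing of `esOn (A.erase i) (k+1)` on `Γ_{k+2}`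
      have NV : ∀ (i : ι), i ∈ A → ∀ w : ι → ℝ, GOn A (k+2) w →
          esOn (A.erase i) (k+1) w ≠ 0 := by
        intro i hi w hw hzero
        have hw' : GOn A (k+1) w := fun j h1 h2 => hw j h1 (by omega)
        have hF' : GOn (A.erase i) k w := (ih A w w).1 hw' i hi
        have h2 : 0 < esOn (A.erase i) k w := esOn_pos hF' le_rfl
        have h3 : esOn (A.erase i) (k+2) w ≤ 0 := newton_special (A.erase i) w k hzero h2
        have h4 : 0 < esOn A (k+2) w := hw (k+2) (by omega) le_rfl
        rw [esOn_erase hi (k+1) w, hzero, mul_zero, add_zero] at h4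
        linarith
      -- the F part at level k+2
      have Fpart : ∀ w : ι → ℝ, GOn A (k+2) w → ∀ i ∈ A, GOn (A.erase i) (k+1) w := by
        intro w hw i hi
        have hw' : GOn A (k+1) w := fun j h1 h2 => hw j h1 (by omega)
        have hF' : GOn (A.erase i) k w := (ih A w w).1 hw' i hi
        intro j hj1 hjk1
        rcases Nat.lt_or_ge j (k+1) with hjlt | hjge
        · exact hF' j hj1 (by omega)
        · have hj : j = k + 1 := by omega
          subst hj
          -- need `0 < esOn (A.erase i) (k+1) w`
          by_contra hc
          push_neg at hc
          rcases eq_or_lt_of_le hc with heq | hlt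
          · exact NV i hi w hw heq
          · -- IVT along the segment from w to the all-ones vector
            set g : ℝ → ℝ := fun τ => esOn (A.erase i) (k+1) (fun l => (1-τ) * w l + τ)
              with hgdef
            have hgc : Continuous g := by
              have hcc : Continuous fun τ : ℝ => ∑ s ∈ (A.erase i).powersetCard (k+1),
                  ∏ l ∈ s, ((1-τ) * w l + τ) :=
                continuous_finset_sum _ fun s _ => continuous_finset_prod _ fun l _ => by fun_prop
              exact hcc
            have hg0 : g 0 < 0 := by
              have : (fun l => (1-(0:ℝ)) * w l + 0) = w := by funext l; ring
              rw [hgdef]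
              simpa [this] using hlt
            have hg1 : 0 < g 1 := by
              have h1 : (fun l => (1-(1:ℝ)) * w l + 1) = fun _ => (1:ℝ) := by funext l; ring
              rw [hgdef]
              simp only [h1]
              rw [esOn_const_one]
              have hcard : k + 2 ≤ A.card := GOn_card hw (by omega)
              have : k + 1 ≤ (A.erase i).card := by
                rw [Finset.card_erase_of_mem hi]
                omega
              exact_mod_cast Nat.choose_pos this
            have := intermediate_value_Icc (by norm_num : (0:ℝ) ≤ 1) hgc.continuousOn
            have hmem : (0:ℝ) ∈ Set.Icc (g 0) (g 1) := ⟨le_of_lt hg0, le_of_lt hg1⟩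
            obtain ⟨τ, hτ, hgτ⟩ := this hmem
            have hwτ : GOn A (k+2) (fun l => (1-τ) * w l + τ) := GOn_seg hw (by omega) hτ
            exact NV i hi _ hwτ hgτ
      refine ⟨Fpart x, ?_⟩
      intro hx hy
      set z := x + y with hz
      have hzl : ∀ l, z l = x l + y l := fun l => rfl
      have hx' : GOn A (k+1) x := fun j h1 h2 => hx j h1 (by omega)
      have hy' : GOn A (k+1) y := fun j h1 h2 => hy j h1 (by omega)
      obtain ⟨hzG, _⟩ := (ih A x y).2 hx' hy'
      have Px : 0 < esOn A (k+1) x := esOn_pos hx' le_rfl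
      have Py : 0 < esOn A (k+1) y := esOn_pos hy' le_rfl
      have Pz : 0 < esOn A (k+1) z := esOn_pos hzG le_rfl
      -- identity: (k+2) σ_{k+2}(v) = σ₁(v) σ_{k+1}(v) - ∑ᵢ v(i)² σ_k(v | A\i)
      have ID : ∀ v : ι → ℝ, ((k+1 : ℕ)+1 : ℝ) * esOn A (k+2) v
          = esOn A 1 v * esOn A (k+1) v - ∑ i ∈ A, (v i)^2 * esOn (A.erase i) k v := by
        intro v
        have h5 := sum_mul_esOn_erase A (k+1) v
        have h6 : ∀ i ∈ A, v i * esOn (A.erase i) (k+1) v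
            = v i * esOn A (k+1) v - (v i)^2 * esOn (A.erase i) k v := by
          intro i hi
          have := esOn_erase hi k v
          have h7 : esOn (A.erase i) (k+1) v = esOn A (k+1) v - v i * esOn (A.erase i) k v := by
            linarith
          rw [h7]
          ring
        rw [Finset.sum_congr rfl h6, Finset.sum_sub_distrib, ← Finset.sum_mul] at h5
        rw [← h5, esOn_one]
        try ring
      -- termwise comparison of the subtracted sums
      have TERM : ∀ i ∈ A,
          (z i)^2 * esOn (A.erase i) k z / esOn A (k+1) z
            ≤ (x i)^2 * esOn (A.erase i) k x / esOn A (k+1) x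
              + (y i)^2 * esOn (A.erase i) k y / esOn A (k+1) y := by
        intro i hi
        have hFx := Fpart x hx i hi
        have hFy := Fpart y hy i hi
        obtain ⟨hGze, Qe⟩ := (ih (A.erase i) x y).2 hFx hFy
        have exk : 0 < esOn (A.erase i) k x := esOn_pos hFx (by omega)
        have eyk : 0 < esOn (A.erase i) k y := esOn_pos hFy (by omega)
        have ezk : 0 < esOn (A.erase i) k z := esOn_pos hGze (by omega)
        set a := esOn A (k+1) x / esOn (A.erase i) k x with ha
        set b := esOn A (k+1) y / esOn (A.erase i) k y with hb
        set c := esOn A (k+1) z / esOn (A.erase i) k z with hc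
        have hapos : 0 < a := div_pos Px exk
        have hbpos : 0 < b := div_pos Py eyk
        have hcab : a + b ≤ c := by
          have hxa : a = x i + esOn (A.erase i) (k+1) x / esOn (A.erase i) k x := by
            rw [ha, esOn_erase hi k x]
            field_simp
            ring
          have hyb : b = y i + esOn (A.erase i) (k+1) y / esOn (A.erase i) k y := by
            rw [hb, esOn_erase hi k y]
            field_simp
            ring
          have hzc : c = z i + esOn (A.erase i) (k+1) z / esOn (A.erase i) k z := by
            rw [hc, esOn_erase hi k z]
            field_simp
            ring
          rw [hxa, hyb, hzc, hzl i]
          linarith [Qe]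
        have key1 : (z i)^2 * esOn (A.erase i) k z / esOn A (k+1) z = (z i)^2 / c := by
          rw [hc]
          field_simp
          try ring
        have key2 : (x i)^2 * esOn (A.erase i) k x / esOn A (k+1) x = (x i)^2 / a := by
          rw [ha]; field_simp; try ring
        have key3 : (y i)^2 * esOn (A.erase i) k y / esOn A (k+1) y = (y i)^2 / b := by
          rw [hb]; field_simp; try ring
        rw [key1, key2, key3]
        calc (z i)^2 / c ≤ (z i)^2 / (a+b) := by
              apply div_le_div_of_nonneg_left (sq_nonneg _) (by linarith) hcab
          _ ≤ (x i)^2 / a + (y i)^2 / b := by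
              rw [hzl i]
              exact sq_div_add _ _ _ _ hapos hbpos
      -- sum the termwise bounds
      have SUM : (∑ i ∈ A, (z i)^2 * esOn (A.erase i) k z) / esOn A (k+1) z
          ≤ (∑ i ∈ A, (x i)^2 * esOn (A.erase i) k x) / esOn A (k+1) x
            + (∑ i ∈ A, (y i)^2 * esOn (A.erase i) k y) / esOn A (k+1) y := by
        rw [Finset.sum_div, Finset.sum_div, Finset.sum_div, ← Finset.sum_add_distrib]
        exact Finset.sum_le_sum TERM
      -- superadditivity of the quotient at level (k+2)/(k+1)
      have QZ : esOn A (k+2) x / esOn A (k+1) x + esOn A (k+2) y / esOn A (k+1) y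
          ≤ esOn A (k+2) z / esOn A (k+1) z := by
        have hKpos : (0:ℝ) < ((k+1 : ℕ)+1 : ℝ) := by positivity
        have e1 : esOn A 1 z = esOn A 1 x + esOn A 1 y := by
          rw [esOn_one, esOn_one, esOn_one, ← Finset.sum_add_distrib]
          rfl
        have qx : ((k+1 : ℕ)+1 : ℝ) * (esOn A (k+2) x / esOn A (k+1) x)
            = esOn A 1 x - (∑ i ∈ A, (x i)^2 * esOn (A.erase i) k x) / esOn A (k+1) x := by
          rw [mul_div_assoc' , ID x]
          field_simp
        have qy : ((k+1 : ℕ)+1 : ℝ) * (esOn A (k+2) y / esOn A (k+1) y)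
            = esOn A 1 y - (∑ i ∈ A, (y i)^2 * esOn (A.erase i) k y) / esOn A (k+1) y := by
          rw [mul_div_assoc' , ID y]
          field_simp
        have qz : ((k+1 : ℕ)+1 : ℝ) * (esOn A (k+2) z / esOn A (k+1) z)
            = esOn A 1 z - (∑ i ∈ A, (z i)^2 * esOn (A.erase i) k z) / esOn A (k+1) z := by
          rw [mul_div_assoc' , ID z]
          field_simp
        have := hKpos
        nlinarith [SUM, qx, qy, qz, e1]
      -- conclude positivity of `esOn A (k+2) z`
      have Pz2 : 0 < esOn A (k+2) z := by
        have hq : 0 < esOn A (k+2) z / esOn A (k+1) z := by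
          have h1 : 0 < esOn A (k+2) x / esOn A (k+1) x :=
            div_pos (esOn_pos hx le_rfl) Px
          have h2 : 0 < esOn A (k+2) y / esOn A (k+1) y :=
            div_pos (esOn_pos hy le_rfl) Py
          linarith [QZ]
        have := mul_pos hq Pz
        rwa [div_mul_cancel₀ _ (ne_of_gt Pz)] at this
      constructor
      · intro j h1 h2
        rcases Nat.lt_or_ge j (k+2) with hjlt | hjge
        · exact hzG j h1 (by omega)
        · have : j = k+2 := by omega
          subst this
          exact Pz2
      · exact QZ

end BigInduction

section Final

lemma esymm_eq_esOn (n j : ℕ) (x : Fin n → ℝ) :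
    esymm n j x = esOn (Finset.univ : Finset (Fin n)) j x := rfl

lemma inGamma_iff_GOn (n k : ℕ) (x : Fin n → ℝ) :
    inGamma n k x ↔ GOn (Finset.univ : Finset (Fin n)) k x := Iff.rfl

lemma GOn_smul_mem {n k : ℕ} {x : Fin n → ℝ} (h : GOn (Finset.univ : Finset (Fin n)) k x)
    {c : ℝ} (hc : 0 < c) : GOn (Finset.univ : Finset (Fin n)) k (c • x) := by
  intro j h1 h2
  have hcx : c • x = fun l => c * x l := by funext l; simp
  rw [hcx, esOn_smul]
  exact mul_pos (pow_pos hc j) (h j h1 h2)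

/-- `Γ_k` is an open convex cone with vertex at the origin: it is stable under
positive combinations `s • λ + t • μ`, and it is an open subset of `ℝ^n`. -/
theorem gamma_open_convex_cone (n k : ℕ) (hk : 1 ≤ k) (hkn : k ≤ n) :
    (∀ (x y : Fin n → ℝ) (s t : ℝ), inGamma n k x → inGamma n k y →
      0 < s → 0 < t → inGamma n k (s • x + t • y)) ∧
    IsOpen {x : Fin n → ℝ | inGamma n k x} := by
  constructor
  · intro x y s t hx hy hs ht
    obtain ⟨k', rfl⟩ : ∃ k', k = k' + 1 := ⟨k - 1, by omega⟩
    rw [inGamma_iff_GOn] at hx hy ⊢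
    exact ((gamma_bundle k' Finset.univ (s • x) (t • y)).2
      (GOn_smul_mem hx hs) (GOn_smul_mem hy ht)).1
  · have hset : {x : Fin n → ℝ | inGamma n k x}
        = ⋂ j ∈ Finset.Icc 1 k, (esymm n j) ⁻¹' (Set.Ioi 0) := by
      ext x
      simp only [Set.mem_setOf_eq, Set.mem_iInter, Set.mem_preimage, Set.mem_Ioi,
        Finset.mem_Icc, inGamma]
      constructor
      · intro h j hj
        exact h j hj.1 hj.2
      · intro h j h1 h2
        exact h j ⟨h1, h2⟩
    rw [hset]
    refine isOpen_biInter_finset fun j _ => ?_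
    have hcont : Continuous (esymm n j) := by
      refine continuous_finset_sum _ fun s _ => continuous_finset_prod _ fun i _ => ?_
      exact continuous_apply i
    exact isOpen_Ioi.preimage hcont

end Final
end
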